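/- For all integers t ≥ 3, k with 1 ≤ k ≤ t-1, and n ≥ t-2, there exists an n-vertex graph with no K_t-minor containing at least C(t-2, k-1) · (n - (k-1)(t-1)/k) cliques of size k; moreover there exists an n-vertex graph (for n ≥ t-2) with no K_t-minor containing at least 2^{t-2} · (n - t + 3) cliques in total. -/

import Mathlib

/-- `G` has a complete graph `K_t` as a minor: there are `t` pairwise-disjoint nonempty
branch sets, each inducing a connected subgraph, with an edge of `G` between any two. -/
def SimpleGraph.HasCompleteMinor {V : Type*} (G : SimpleGraph V) (t : ℕ) : Prop :=
  ∃ B : Fin t → Set V,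
    (∀ i, (B i).Nonempty) ∧
    (∀ i, (G.induce (B i)).Connected) ∧
    (Pairwise fun i j => Disjoint (B i) (B j)) ∧
    (Pairwise fun i j => ∃ u ∈ B i, ∃ v ∈ B j, G.Adj u v)

/-- The number of `k`-cliques of `G`. -/
noncomputable def SimpleGraph.cliqueCount {V : Type*} (G : SimpleGraph V) (k : ℕ) : ℕ :=
  {s : Finset V | G.IsNClique k s}.ncard

/-- The total number of cliques of `G` (including the empty clique). -/
noncomputable def SimpleGraph.totalCliqueCount {V : Type*} (G : SimpleGraph V) : ℕ :=
  {s : Finset V | G.IsClique (s : Set V)}.ncard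

/-! ### Auxiliary construction: the `w`-th power of a path (a `w`-tree) -/

/-- The graph on `Fin n` joining vertices at distance at most `w`. -/
def windowGraph (n w : ℕ) : SimpleGraph (Fin n) where
  Adj i j := i ≠ j ∧ i.val ≤ j.val + w ∧ j.val ≤ i.val + w
  symm := by constructor; intro i j ⟨h1, h2, h3⟩; exact ⟨h1.symm, h3, h2⟩
  loopless := by constructor; intro i ⟨h1, _⟩; exact h1 rfl

/-- A walk in an induced subgraph of `windowGraph` starting below `M - w` and ending at
or above `M` must pass through the window `[M - w, M)`. -/
lemma windowGraph_crossing {n w : ℕ} (s : Set (Fin n)) (M : ℕ) :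
    ∀ {x y : ↥s} (_ : ((windowGraph n w).induce s).Walk x y),
      (x : Fin n).val + w < M → M ≤ (y : Fin n).val →
      ∃ z : ↥s, M ≤ (z : Fin n).val + w ∧ (z : Fin n).val < M := by
  intro x y p
  induction p with
  | nil => intro h1 h2; omega
  | @cons a b c h p ih =>
    intro h1 h2
    by_cases hc : (b : Fin n).val + w < M
    · exact ih hc h2
    · obtain ⟨-, hab, hba⟩ := h
      have hba' : ((b : Fin n) : ℕ) ≤ ((a : Fin n) : ℕ) + w := hba
      exact ⟨b, by omega, by omega⟩

lemma windowGraph_not_minor (n w : ℕ) : ¬ (windowGraph n w).HasCompleteMinor (w + 2) := by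
  rintro ⟨B, hne, hconn, hdisj, hadj⟩
  have hvals : ∀ i, {x : ℕ | ∃ v ∈ B i, v.val = x}.Nonempty := by
    intro i
    obtain ⟨v, hv⟩ := hne i
    exact ⟨v.val, v, hv, rfl⟩
  set m : Fin (w + 2) → ℕ := fun i => sInf {x : ℕ | ∃ v ∈ B i, v.val = x} with hm
  have hmem : ∀ i, ∃ v ∈ B i, v.val = m i := fun i => Nat.sInf_mem (hvals i)
  have hle : ∀ i, ∀ v ∈ B i, m i ≤ v.val := fun i v hv => Nat.sInf_le ⟨v, hv, rfl⟩
  obtain ⟨j, hj⟩ := Finite.exists_max m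
  set M := m j with hM
  have key : ∀ i, i ≠ j → ∃ v : Fin n, v ∈ B i ∧ M ≤ v.val + w ∧ v.val < M := by
    intro i hij
    obtain ⟨v₀, hv₀, hv₀val⟩ := hmem i
    have hmi : m i < M := by
      rcases lt_or_eq_of_le (hj i) with h | h
      · exact h
      · exfalso
        obtain ⟨vj, hvj, hvjval⟩ := hmem j
        have : v₀ = vj := Fin.val_injective (by rw [hv₀val, hvjval, h])
        exact (Set.disjoint_left.mp (hdisj hij) hv₀) (this ▸ hvj)
    obtain ⟨u, hu, v, hv, hadjuv⟩ := hadj hij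
    have hvM : M ≤ v.val := hle j v hv
    obtain ⟨-, huv, hvu⟩ := hadjuv
    by_cases hcase : u.val < M
    · exact ⟨u, hu, by omega, hcase⟩
    · by_cases hc2 : m i + w < M
      · have hreach := ((hconn i).preconnected ⟨v₀, hv₀⟩ ⟨u, hu⟩)
        obtain ⟨p⟩ := hreach
        obtain ⟨z, hz1, hz2⟩ := windowGraph_crossing (B i) M p
          (by simp [hv₀val]; omega) (by simp; omega)
        exact ⟨z.val, z.property, hz1, hz2⟩
      · exact ⟨v₀, hv₀, by omega, by omega⟩
  choose f hf1 hf2 hf3 using key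
  have hinj : Function.Injective
      (fun i : {i : Fin (w + 2) // i ≠ j} => (⟨(f i.1 i.2).val, by
        simp only [Finset.mem_Ico]; exact ⟨by have := hf2 i.1 i.2; omega, hf3 i.1 i.2⟩⟩ :
        ↥(Finset.Ico (M - w) M))) := by
    intro a b hab
    have : f a.1 a.2 = f b.1 b.2 := Fin.val_injective (congrArg Subtype.val hab)
    by_contra hne'
    have hne'' : a.1 ≠ b.1 := fun h => hne' (Subtype.ext h)
    exact (Set.disjoint_left.mp (hdisj hne'') (hf1 a.1 a.2)) (this ▸ hf1 b.1 b.2)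
  have hcard := Fintype.card_le_of_injective _ hinj
  have hcard2 : Fintype.card {i : Fin (w + 2) // i ≠ j} = w + 1 := by
    rw [Fintype.card_subtype_compl, Fintype.card_subtype_eq, Fintype.card_fin]; omega
  rw [hcard2, Fintype.card_coe, Nat.card_Ico] at hcard
  omega

/-! ### Counting cliques of the window graph -/

/-- lift a finset of naturals to `Fin n`. -/
def liftF (n : ℕ) (s : Finset ℕ) : Finset (Fin n) :=
  Finset.univ.filter (fun i => i.val ∈ s)

lemma mem_liftF {n : ℕ} {s : Finset ℕ} {i : Fin n} : i ∈ liftF n s ↔ i.val ∈ s := by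
  simp [liftF]

lemma liftF_image {n : ℕ} {s : Finset ℕ} (h : s ⊆ Finset.range n) :
    (liftF n s).image Fin.val = s := by
  ext x
  simp only [Finset.mem_image, mem_liftF]
  constructor
  · rintro ⟨i, hi, rfl⟩; exact hi
  · intro hx
    have hx' : x < n := Finset.mem_range.mp (h hx)
    exact ⟨⟨x, hx'⟩, hx, rfl⟩

lemma liftF_card {n : ℕ} {s : Finset ℕ} (h : s ⊆ Finset.range n) :
    (liftF n s).card = s.card := by
  conv_rhs => rw [← liftF_image h]
  rw [Finset.card_image_of_injective _ Fin.val_injective]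

lemma liftF_injOn {n : ℕ} {s t : Finset ℕ} (hs : s ⊆ Finset.range n)
    (ht : t ⊆ Finset.range n) (h : liftF n s = liftF n t) : s = t := by
  rw [← liftF_image hs, ← liftF_image ht, h]

/-- spread condition gives a clique. -/
lemma liftF_isClique {n w : ℕ} {s : Finset ℕ}
    (h : ∀ a ∈ s, ∀ b ∈ s, a ≤ b + w) :
    (windowGraph n w).IsClique (liftF n s : Set (Fin n)) := by
  intro a ha b hb hab
  simp only [Finset.coe_filter, Set.mem_setOf_eq, liftF] at ha hb
  exact ⟨hab, h a.val ha.2 b.val hb.2, h b.val hb.2 a.val ha.2⟩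

section count

variable (n w k : ℕ)

/-- index family 1: cliques whose minimum is below `n - w`. -/
def fam1 (P : Finset (Finset ℕ)) : Finset (Finset ℕ) :=
  ((Finset.range (n - w)) ×ˢ P).image (fun p => insert p.1 (p.2.image (p.1 + ·)))

lemma fam1_card (P : Finset (Finset ℕ)) (hP : ∀ A ∈ P, A ⊆ Finset.Icc 1 w) :
    (fam1 n w P).card = (n - w) * P.card := by
  rw [fam1, Finset.card_image_of_injOn, Finset.card_product, Finset.card_range]
  rintro ⟨m, A⟩ hmA ⟨m', A'⟩ hmA' he
  simp only [Finset.mem_coe, Finset.coe_product, Set.mem_prod, Finset.mem_range] at hmA hmA'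
  have hA := hP A hmA.2
  have hA' := hP A' hmA'.2
  have hmin : ∀ (a b : ℕ) (C D : Finset ℕ), C ⊆ Finset.Icc 1 w → D ⊆ Finset.Icc 1 w →
      insert a (C.image (a + ·)) = insert b (D.image (b + ·)) → b ≤ a := by
    intro a b C D hC hD hCD
    have : a ∈ insert b (D.image (b + ·)) := by rw [← hCD]; exact Finset.mem_insert_self a _
    rcases Finset.mem_insert.mp this with h | h
    · omega
    · obtain ⟨x, hx, hxe⟩ := Finset.mem_image.mp h
      have h1 : b + x = a := hxe
      have := (Finset.mem_Icc.mp (hD hx)).1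
      omega
  have hmm : m = m' := le_antisymm (hmin m' m A' A hA' hA he.symm) (hmin m m' A A' hA hA' he)
  subst hmm
  have hAe : A = A' := by
    have hni : ∀ (C : Finset ℕ), C ⊆ Finset.Icc 1 w → m ∉ C.image (m + ·) := by
      intro C hC hmem
      obtain ⟨x, hx, hxe⟩ := Finset.mem_image.mp hmem
      have := (Finset.mem_Icc.mp (hC hx)).1
      omega
    have h2 : A.image (m + ·) = A'.image (m + ·) := by
      have := congrArg (fun s => Finset.erase s m) he
      simpa [Finset.erase_insert_eq_erase, Finset.erase_eq_of_notMem (hni A hA),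
        Finset.erase_eq_of_notMem (hni A' hA')] using this
    exact Finset.image_injective (add_right_injective m) h2
  rw [hAe]

lemma fam1_mem {P : Finset (Finset ℕ)} (hP : ∀ A ∈ P, A ⊆ Finset.Icc 1 w)
    {s : Finset ℕ} (hs : s ∈ fam1 n w P) :
    (∃ m < n - w, m ∈ s ∧ s ⊆ Finset.Icc m (m + w)) ∧
    (∃ A ∈ P, s.card = A.card + 1) := by
  obtain ⟨⟨m, A⟩, hmA, rfl⟩ := Finset.mem_image.mp hs
  simp only [Finset.mem_product, Finset.mem_range] at hmA
  have hA := hP A hmA.2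
  constructor
  · refine ⟨m, hmA.1, Finset.mem_insert_self _ _, ?_⟩
    intro x hx
    rcases Finset.mem_insert.mp hx with h | h
    · subst h; exact Finset.mem_Icc.mpr ⟨le_rfl, by omega⟩
    · obtain ⟨y, hy, hye⟩ := Finset.mem_image.mp h
      have h1 : m + y = x := hye
      have := Finset.mem_Icc.mp (hA hy)
      exact Finset.mem_Icc.mpr ⟨by omega, by omega⟩
  · refine ⟨A, hmA.2, ?_⟩
    rw [Finset.card_insert_of_notMem, Finset.card_image_of_injective _
      (add_right_injective m)]
    intro hmem
    obtain ⟨x, hx, hxe⟩ := Finset.mem_image.mp hmem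
    have := (Finset.mem_Icc.mp (hA hx)).1
    omega

/-- union of the two families, mapped to `Fin n`, is a set of cliques -/
lemma count_main (hw : w ≤ n) (P Q : Finset (Finset ℕ))
    (hP : ∀ A ∈ P, A ⊆ Finset.Icc 1 w)
    (hQ : Q ⊆ (Finset.Ico (n - w) n).powerset) :
    ∃ C : Finset (Finset (Fin n)),
      C.card = (n - w) * P.card + Q.card ∧
      (∀ s ∈ C, (windowGraph n w).IsClique (s : Set (Fin n))) ∧
      (∀ s ∈ C, (∃ A ∈ P, s.card = A.card + 1) ∨ s ∈ Q.image (liftF n)) := by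
  classical
  have hsub : ∀ s ∈ fam1 n w P ∪ Q, s ⊆ Finset.range n ∧ ∀ a ∈ s, ∀ b ∈ s, a ≤ b + w := by
    intro s hs
    rcases Finset.mem_union.mp hs with h | h
    · obtain ⟨⟨m, hm, hms, hsub⟩, -⟩ := fam1_mem n w hP h
      constructor
      · intro x hx
        have := Finset.mem_Icc.mp (hsub hx)
        simp only [Finset.mem_range]
        omega
      · intro a ha b hb
        have h1 := Finset.mem_Icc.mp (hsub ha)
        have h2 := Finset.mem_Icc.mp (hsub hb)
        omega
    · have hs' : s ⊆ Finset.Ico (n - w) n := Finset.mem_powerset.mp (hQ h)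
      constructor
      · intro x hx
        have := Finset.mem_Ico.mp (hs' hx)
        simp only [Finset.mem_range]; omega
      · intro a ha b hb
        have h1 := Finset.mem_Ico.mp (hs' ha)
        have h2 := Finset.mem_Ico.mp (hs' hb)
        omega
  refine ⟨(fam1 n w P ∪ Q).image (liftF n), ?_, ?_, ?_⟩
  · rw [Finset.card_image_of_injOn, Finset.card_union_of_disjoint, fam1_card n w P hP]
    · rw [Finset.disjoint_left]
      intro s hs1 hs2
      obtain ⟨⟨m, hm, hms, -⟩, -⟩ := fam1_mem n w hP hs1
      have := Finset.mem_Ico.mp ((Finset.mem_powerset.mp (hQ hs2)) hms)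
      omega
    · intro s hs t ht hst
      exact liftF_injOn (hsub s hs).1 (hsub t ht).1 hst
  · intro s hs
    obtain ⟨u, hu, rfl⟩ := Finset.mem_image.mp hs
    exact liftF_isClique (hsub u hu).2
  · intro s hs
    obtain ⟨u, hu, rfl⟩ := Finset.mem_image.mp hs
    rcases Finset.mem_union.mp hu with h | h
    · left
      obtain ⟨-, A, hA, hcard⟩ := fam1_mem n w hP h
      exact ⟨A, hA, by rw [liftF_card (hsub u hu).1]; exact hcard⟩
    · right
      exact Finset.mem_image_of_mem _ h

end count

lemma cliqueCount_lower (n w k : ℕ) (hw : w ≤ n) (hk : 1 ≤ k) :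
    (n - w) * w.choose (k - 1) + w.choose k ≤ (windowGraph n w).cliqueCount k := by
  classical
  obtain ⟨C, hcard, hclique, hsize⟩ := count_main n w hw
    ((Finset.Icc 1 w).powersetCard (k - 1)) ((Finset.Ico (n - w) n).powersetCard k)
    (fun A hA => Finset.mem_powersetCard.mp hA |>.1)
    (fun A hA => Finset.mem_powerset.mpr (Finset.mem_powersetCard.mp hA).1)
  have hC : (C : Set (Finset (Fin n))) ⊆ {s : Finset (Fin n) | (windowGraph n w).IsNClique k s} := by
    intro s hs
    have hs' : s ∈ C := hs
    refine ⟨hclique s hs', ?_⟩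
    rcases hsize s hs' with ⟨A, hA, hcA⟩ | h
    · rw [hcA, (Finset.mem_powersetCard.mp hA).2]
      omega
    · obtain ⟨u, hu, rfl⟩ := Finset.mem_image.mp h
      obtain ⟨hsub, hcu⟩ := Finset.mem_powersetCard.mp hu
      rw [liftF_card (fun x hx => by
        have := Finset.mem_Ico.mp (hsub hx); simp only [Finset.mem_range]; omega)]
      exact hcu
  calc (n - w) * w.choose (k - 1) + w.choose k
      = C.card := by
        rw [hcard, Finset.card_powersetCard, Finset.card_powersetCard,
          Nat.card_Icc, Nat.card_Ico]
        congr 2 <;> omega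
    _ = (C : Set (Finset (Fin n))).ncard := (Set.ncard_coe_finset C).symm
    _ ≤ _ := Set.ncard_le_ncard hC (Set.toFinite _)

lemma totalCliqueCount_lower (n w : ℕ) (hw : w ≤ n) :
    (n - w) * 2 ^ w + 2 ^ w ≤ (windowGraph n w).totalCliqueCount := by
  classical
  obtain ⟨C, hcard, hclique, -⟩ := count_main n w hw
    ((Finset.Icc 1 w).powerset) ((Finset.Ico (n - w) n).powerset)
    (fun A hA => Finset.mem_powerset.mp hA) (fun A hA => hA)
  have hC : (C : Set (Finset (Fin n))) ⊆
      {s : Finset (Fin n) | (windowGraph n w).IsClique (s : Set (Fin n))} := by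
    intro s hs
    exact hclique s hs
  calc (n - w) * 2 ^ w + 2 ^ w
      = C.card := by
        rw [hcard, Finset.card_powerset, Finset.card_powerset, Nat.card_Icc, Nat.card_Ico]
        congr 2 <;> omega
    _ = (C : Set (Finset (Fin n))).ncard := (Set.ncard_coe_finset C).symm
    _ ≤ _ := Set.ncard_le_ncard hC (Set.toFinite _)

lemma clique_algebra (t n k : ℕ) (ht : 3 ≤ t) (hn : t - 2 ≤ n) (hk : 1 ≤ k) (hk2 : k ≤ t - 1) :
    ((t - 2).choose (k - 1) : ℚ) *
        ((n : ℚ) - ((k - 1 : ℕ) : ℚ) * ((t - 1 : ℕ) : ℚ) / (k : ℚ)) =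
      (((n - (t - 2)) * (t - 2).choose (k - 1) + (t - 2).choose k : ℕ) : ℚ) := by
  have hk0 : (k : ℚ) ≠ 0 := Nat.cast_ne_zero.mpr (by omega)
  have h1t : 1 ≤ t := by omega
  have h2t : 2 ≤ t := by omega
  have hk1w : k - 1 ≤ t - 2 := by omega
  have key : ((t - 2).choose k : ℚ) * k = ((t - 2).choose (k - 1) : ℚ) * ((t : ℚ) - 1 - k) := by
    have h := Nat.choose_succ_right_eq (t - 2) (k - 1)
    rw [Nat.sub_add_cancel hk] at h
    have h' := congrArg (Nat.cast : ℕ → ℚ) h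
    rw [Nat.cast_mul, Nat.cast_mul, Nat.cast_sub hk1w, Nat.cast_sub hk, Nat.cast_sub h2t] at h'
    rw [h']
    push_cast
    ring
  rw [Nat.cast_add, Nat.cast_mul, Nat.cast_sub hn, Nat.cast_sub (by omega : 2 ≤ t),
    Nat.cast_sub (by omega : 1 ≤ k), Nat.cast_sub (by omega : 1 ≤ t)]
  push_cast
  field_simp
  linear_combination -key

/-- Lower bounds: for `t ≥ 3`, `1 ≤ k ≤ t-1` and `n ≥ t-2` there is an `n`-vertex
`K_t`-minor-free graph with at least `C(t-2, k-1) * (n - (k-1)(t-1)/k)` cliques of size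
`k`, and an `n`-vertex `K_t`-minor-free graph with at least `2^(t-2) * (n - t + 3)`
cliques in total. -/
theorem exists_not_hasCompleteMinor_many_cliques (t n : ℕ) (ht : 3 ≤ t) (hn : t - 2 ≤ n) :
    (∀ k : ℕ, 1 ≤ k → k ≤ t - 1 →
      ∃ G : SimpleGraph (Fin n), ¬ G.HasCompleteMinor t ∧
        ((t - 2).choose (k - 1) : ℚ) *
            ((n : ℚ) - ((k - 1 : ℕ) : ℚ) * ((t - 1 : ℕ) : ℚ) / (k : ℚ)) ≤
          (G.cliqueCount k : ℚ)) ∧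
    (∃ G : SimpleGraph (Fin n), ¬ G.HasCompleteMinor t ∧
        2 ^ (t - 2) * (n + 3 - t) ≤ G.totalCliqueCount) := by
  have hw2 : t - 2 + 2 = t := by omega
  have hnm : ¬ (windowGraph n (t - 2)).HasCompleteMinor t := by
    rw [← hw2]; exact windowGraph_not_minor n (t - 2)
  constructor
  · intro k hk hk2
    refine ⟨windowGraph n (t - 2), hnm, ?_⟩
    have hN := cliqueCount_lower n (t - 2) k hn hk
    rw [clique_algebra t n k ht hn hk hk2]
    exact_mod_cast hN
  · refine ⟨windowGraph n (t - 2), hnm, ?_⟩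
    have hT := totalCliqueCount_lower n (t - 2) hn
    have heq : 2 ^ (t - 2) * (n + 3 - t) = (n - (t - 2)) * 2 ^ (t - 2) + 2 ^ (t - 2) := by
      have h1 : n + 3 - t = (n - (t - 2)) + 1 := by omega
      rw [h1]
      ring
    rw [heq]
    exact hT
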